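/- Fix a real number a and for each T > 0 with a·T < 1 let k^u(T) denote the unique k > |a| satisfying T·√(k² − a²) = arccos(a/k). Then: (i) if a > 0, lim_{T→(1/a)⁻} k^u(T) = a and lim_{T→0⁺} k^u(T) = +∞; (ii) if a < 0, lim_{T→+∞} k^u(T) = |a| and lim_{T→0⁺} k^u(T) = +∞. -/

import Mathlib

open Real Filter Set

private lemma phi_strictMono : StrictMonoOn (fun θ : ℝ => Real.sin θ - θ * Real.cos θ)
    (Set.Icc 0 (Real.pi / 2)) := by
  apply strictMonoOn_of_deriv_pos (convex_Icc _ _)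
  · exact (Real.continuous_sin.sub (continuous_id.mul Real.continuous_cos)).continuousOn
  · intro x hx
    rw [interior_Icc] at hx
    have h : HasDerivAt (fun θ : ℝ => Real.sin θ - θ * Real.cos θ)
        (Real.cos x - (1 * Real.cos x + x * (-Real.sin x))) x :=
      (Real.hasDerivAt_sin x).sub ((hasDerivAt_id x).mul (Real.hasDerivAt_cos x))
    rw [h.deriv]
    have hs : 0 < Real.sin x :=
      Real.sin_pos_of_pos_of_lt_pi hx.1 (lt_trans hx.2 (by linarith [Real.pi_pos]))
    nlinarith [hx.1]

private lemma sin_arccos_div {a k : ℝ} (hk : |a| < k) :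
    Real.sin (Real.arccos (a / k)) = Real.sqrt (k ^ 2 - a ^ 2) / k := by
  have hk0 : 0 < k := (abs_nonneg a).trans_lt hk
  rw [Real.sin_arccos]
  have h1 : 1 - (a / k) ^ 2 = (k ^ 2 - a ^ 2) / k ^ 2 := by field_simp
  have hnn : (0:ℝ) ≤ k ^ 2 - a ^ 2 := by nlinarith [abs_nonneg a, sq_abs a]
  rw [h1, Real.sqrt_div hnn, Real.sqrt_sq hk0.le]

private lemma lb_lem {a T k : ℝ} (hT : 0 < T) (hk : |a| < k)
    (heq : T * Real.sqrt (k ^ 2 - a ^ 2) = Real.arccos (a / k)) : 1 / T ≤ k := by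
  have hk0 : 0 < k := (abs_nonneg a).trans_lt hk
  have hpos : (0:ℝ) < k ^ 2 - a ^ 2 := by nlinarith [abs_nonneg a, sq_abs a]
  have hs : 0 < Real.sqrt (k ^ 2 - a ^ 2) := Real.sqrt_pos.2 hpos
  have h1 : Real.sqrt (k ^ 2 - a ^ 2) / k ≤ T * Real.sqrt (k ^ 2 - a ^ 2) := by
    rw [heq, ← sin_arccos_div hk]
    exact Real.sin_le (Real.arccos_nonneg _)
  rw [div_le_iff₀ hk0] at h1
  have h2 : 1 ≤ T * k := by nlinarith
  rw [div_le_iff₀ hT]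
  linarith

private lemma ub_lem {a T k : ℝ} (hT : 0 < T) (hk : |a| < k)
    (heq : T * Real.sqrt (k ^ 2 - a ^ 2) = Real.arccos (a / k)) :
    k ≤ Real.sqrt (a ^ 2 + Real.pi ^ 2 / T ^ 2) := by
  have hk0 : 0 < k := (abs_nonneg a).trans_lt hk
  have hnn : (0:ℝ) ≤ k ^ 2 - a ^ 2 := by nlinarith [abs_nonneg a, sq_abs a]
  have h1 : T * Real.sqrt (k ^ 2 - a ^ 2) ≤ Real.pi := heq ▸ Real.arccos_le_pi _
  have hs2 : Real.sqrt (k ^ 2 - a ^ 2) ^ 2 = k ^ 2 - a ^ 2 := Real.sq_sqrt hnn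
  have h2 : k ^ 2 ≤ a ^ 2 + Real.pi ^ 2 / T ^ 2 := by
    have h3 : k ^ 2 - a ^ 2 ≤ Real.pi ^ 2 / T ^ 2 := by
      rw [le_div_iff₀ (by positivity)]
      have h4 : (T * Real.sqrt (k ^ 2 - a ^ 2)) ^ 2 ≤ Real.pi ^ 2 :=
        pow_le_pow_left₀ (mul_nonneg hT.le (Real.sqrt_nonneg _)) h1 2
      calc (k ^ 2 - a ^ 2) * T ^ 2 = (T * Real.sqrt (k ^ 2 - a ^ 2)) ^ 2 := by
            rw [mul_pow, hs2]; ring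
        _ ≤ Real.pi ^ 2 := h4
    linarith
  calc k = Real.sqrt (k ^ 2) := (Real.sqrt_sq hk0.le).symm
    _ ≤ _ := Real.sqrt_le_sqrt h2

theorem stmt4 (a : ℝ) (ku : ℝ → ℝ)
    (hku : ∀ T : ℝ, 0 < T → a * T < 1 →
      |a| < ku T ∧ T * Real.sqrt ((ku T) ^ 2 - a ^ 2) = Real.arccos (a / ku T)) :
    (0 < a →
      Filter.Tendsto ku (nhdsWithin (1 / a) (Set.Iio (1 / a))) (nhds a) ∧
      Filter.Tendsto ku (nhdsWithin 0 (Set.Ioi 0)) Filter.atTop) ∧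
    (a < 0 →
      Filter.Tendsto ku Filter.atTop (nhds |a|) ∧
      Filter.Tendsto ku (nhdsWithin 0 (Set.Ioi 0)) Filter.atTop) := by
  have hat : (∀ᶠ T in nhdsWithin (0:ℝ) (Set.Ioi 0), a * T < 1) →
      Filter.Tendsto ku (nhdsWithin 0 (Set.Ioi 0)) Filter.atTop := by
    intro hev
    have hmem : ∀ᶠ T in nhdsWithin (0:ℝ) (Set.Ioi 0), T ∈ Set.Ioi (0:ℝ) :=
      eventually_mem_nhdsWithin
    refine tendsto_atTop_mono' _ ?_ tendsto_inv_nhdsGT_zero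
    filter_upwards [hev, hmem] with T h1 h2
    obtain ⟨hk, heq⟩ := hku T h2 h1
    have := lb_lem h2 hk heq
    rwa [one_div] at this
  constructor
  · intro ha
    refine ⟨?_, ?_⟩
    · rw [Metric.tendsto_nhdsWithin_nhds]
      intro ε hε
      set θ₀ := Real.arccos (a / (a + ε)) with hθ₀def
      have haε : 0 < a + ε := by linarith
      have hx0 : 0 < a / (a + ε) := div_pos ha haε
      have hx1 : a / (a + ε) < 1 := (div_lt_one haε).2 (by linarith)
      have hθ₀pos : 0 < θ₀ := Real.arccos_pos.2 hx1
      have hθ₀le : θ₀ ≤ Real.pi / 2 := Real.arccos_le_pi_div_two.2 hx0.le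
      set δ := Real.sin θ₀ - θ₀ * Real.cos θ₀ with hδdef
      have hδpos : 0 < δ := by
        have h := phi_strictMono (Set.left_mem_Icc.2 (by positivity)) ⟨hθ₀pos.le, hθ₀le⟩ hθ₀pos
        simp only [Real.sin_zero, Real.cos_zero, zero_mul, sub_zero] at h
        rw [hδdef]
        linarith
      refine ⟨min (δ / a) (1 / (2 * a)), by positivity, ?_⟩
      intro T hT hdist
      have hTlt : T < 1 / a := hT
      have hdist' : 1 / a - T < min (δ / a) (1 / (2 * a)) := by
        rw [Real.dist_eq, abs_sub_lt_iff] at hdist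
        linarith [hdist.2]
      have hTpos : 0 < T := by
        have h2 : 1 / a - T < 1 / (2 * a) := lt_of_lt_of_le hdist' (min_le_right _ _)
        have h3 : 1 / a = 2 * (1 / (2 * a)) := by field_simp
        nlinarith [one_div_pos.2 (by positivity : (0:ℝ) < 2 * a)]
      have haT : a * T < 1 := by
        calc a * T < a * (1 / a) := mul_lt_mul_of_pos_left hTlt ha
          _ = 1 := by field_simp
      obtain ⟨hk, heq⟩ := hku T hTpos haT
      set k := ku T with hkdef
      have hk0 : 0 < k := (abs_nonneg a).trans_lt hk
      have hak : a < k := (le_abs_self a).trans_lt hk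
      have hklt : k < a + ε := by
        by_contra hge
        push_neg at hge
        set θ := Real.arccos (a / k) with hθdef
        have hxk0 : 0 < a / k := div_pos ha hk0
        have hxk1 : a / k < 1 := (div_lt_one hk0).2 hak
        have hθpos : 0 < θ := Real.arccos_pos.2 hxk1
        have hθle : θ ≤ Real.pi / 2 := Real.arccos_le_pi_div_two.2 hxk0.le
        have hle : a / k ≤ a / (a + ε) := by
          apply div_le_div_of_nonneg_left ha.le haε hge
        have hθ₀θ : θ₀ ≤ θ := by
          rcases eq_or_lt_of_le hle with h | h
          · rw [hθ₀def, hθdef, h]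
          · exact (Real.strictAntiOn_arccos ⟨by linarith, hxk1.le⟩
              ⟨by linarith, hx1.le⟩ h).le
        have hcos : Real.cos θ = a / k := Real.cos_arccos (by linarith) hxk1.le
        have hsin : Real.sin θ = Real.sqrt (k ^ 2 - a ^ 2) / k := sin_arccos_div hk
        have hsinpos : 0 < Real.sin θ :=
          Real.sin_pos_of_pos_of_lt_pi hθpos (hθle.trans_lt (by linarith [Real.pi_pos]))
        have hsinle : Real.sin θ ≤ 1 := Real.sin_le_one θ
        have hφ : δ ≤ Real.sin θ - θ * Real.cos θ := by
          rcases eq_or_lt_of_le hθ₀θ with h | h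
          · rw [hδdef, h]
          · exact (phi_strictMono ⟨hθ₀pos.le, hθ₀le⟩ ⟨hθpos.le, hθle⟩ h).le
        have hs_eq : Real.sqrt (k ^ 2 - a ^ 2) = k * Real.sin θ := by
          rw [hsin]; field_simp
        have heq' : T * (k * Real.sin θ) = θ := by rw [← hs_eq]; exact heq
        have ha_eq : a = k * Real.cos θ := by rw [hcos]; field_simp
        have hmul : a * T * Real.sin θ = θ * Real.cos θ := by
          calc a * T * Real.sin θ = Real.cos θ * (T * (k * Real.sin θ)) := by
                rw [ha_eq]; ring
            _ = θ * Real.cos θ := by rw [heq']; ring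
        have h1 : (1 - a * T) * Real.sin θ = Real.sin θ - θ * Real.cos θ := by
          rw [sub_mul, one_mul, hmul]
        have h3 : δ ≤ 1 - a * T := by
          have h2 : δ * Real.sin θ ≤ (1 - a * T) * Real.sin θ := by
            rw [h1]; nlinarith
          exact le_of_mul_le_mul_right h2 hsinpos
        have h4 : 1 / a - T < δ / a := hdist'.trans_le (min_le_left _ _)
        have h5 : 1 - a * T < δ := by
          have h6 := mul_lt_mul_of_pos_left h4 ha
          have h7 : a * (1 / a - T) = 1 - a * T := by field_simp
          have h8 : a * (δ / a) = δ := by field_simp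
          linarith
        linarith
      rw [Real.dist_eq, abs_lt]
      constructor <;> linarith
    · apply hat
      have h1 : ∀ᶠ T in nhds (0:ℝ), T < 1 / a := eventually_lt_nhds (by positivity)
      filter_upwards [h1.filter_mono nhdsWithin_le_nhds,
        (eventually_mem_nhdsWithin : ∀ᶠ T in nhdsWithin (0:ℝ) (Set.Ioi 0), T ∈ Set.Ioi 0)]
        with T h2 h3
      calc a * T < a * (1 / a) := mul_lt_mul_of_pos_left h2 ha
        _ = 1 := by field_simp
  · intro ha
    refine ⟨?_, ?_⟩
    · have hev : ∀ᶠ T in Filter.atTop, (0:ℝ) < T := eventually_gt_atTop 0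
      have hlb : ∀ᶠ T in Filter.atTop, |a| ≤ ku T := by
        filter_upwards [hev] with T hT
        exact (hku T hT (by nlinarith)).1.le
      have hub : ∀ᶠ T in Filter.atTop, ku T ≤ Real.sqrt (a ^ 2 + Real.pi ^ 2 / T ^ 2) := by
        filter_upwards [hev] with T hT
        obtain ⟨hk, heq⟩ := hku T hT (by nlinarith)
        exact ub_lem hT hk heq
      have hg : Filter.Tendsto (fun T => Real.sqrt (a ^ 2 + Real.pi ^ 2 / T ^ 2))
          Filter.atTop (nhds |a|) := by
        have h1 : Filter.Tendsto (fun T : ℝ => a ^ 2 + Real.pi ^ 2 / T ^ 2)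
            Filter.atTop (nhds (a ^ 2 + 0)) :=
          tendsto_const_nhds.add
            (Filter.Tendsto.div_atTop tendsto_const_nhds (tendsto_pow_atTop two_ne_zero))
        have := (Real.continuous_sqrt.tendsto (a ^ 2 + 0)).comp h1
        simpa [Real.sqrt_sq_eq_abs, Function.comp_def] using this
      exact tendsto_of_tendsto_of_tendsto_of_le_of_le' tendsto_const_nhds hg hlb hub
    · apply hat
      filter_upwards [(eventually_mem_nhdsWithin :
        ∀ᶠ T in nhdsWithin (0:ℝ) (Set.Ioi 0), T ∈ Set.Ioi 0)] with T hT
      nlinarith [Set.mem_Ioi.1 hT]
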